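/- arXiv:1309.0772 — 4 statements merged into one kernel-verified Lean document; each statement's English description precedes it below -/
import Mathlib

section
/- For 0 < q < 1 and nonnegative integers n, k, l, r with l = n + k - 2r and 0 ≤ r ≤ min(n,k), the ratio [k+1]_q[n+1]_q / ([l+1]_q [r+1]_q^2) satisfies (1-q^2)^3 ≤ [k+1]_q[n+1]_q/([l+1]_q[r+1]_q^2) ≤ (1-q^2)^{-2}. -/
/-- The `q`-number `[a]_q = q^{-a+1}(1-q^{2a})/(1-q^2)`. -/
noncomputable def qNum (q : ℝ) (a : ℕ) : ℝ :=
  q ^ (1 - (a : ℤ)) * (1 - q ^ (2 * a)) / (1 - q ^ 2)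

lemma qNum_succ (q : ℝ) (hq0 : 0 < q) (a : ℕ) :
    qNum q (a + 1) = (1 - (q ^ 2) ^ (a + 1)) / (q ^ a * (1 - q ^ 2)) := by
  unfold qNum
  have h1 : (1 - ((a : ℕ) + 1 : ℕ) : ℤ) = -(a : ℤ) := by push_cast; ring
  have h2 : 2 * (a + 1) = (a + 1) * 2 := by ring
  rw [h1, zpow_neg, zpow_natCast, h2, pow_mul]
  field_simp
  ring_nf

/-- For `0 < q < 1` and nonnegative integers `n, k, l, r` with `l = n + k - 2r` and
`r ≤ min n k`, one has
`(1-q²)³ ≤ [k+1]_q[n+1]_q/([l+1]_q[r+1]_q²) ≤ (1-q²)⁻²`. -/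
theorem qNumber_ratio_bounds (q : ℝ) (hq0 : 0 < q) (hq1 : q < 1) (n k r l : ℕ)
    (hr : r ≤ min n k) (hl : l = n + k - 2 * r) :
    (1 - q ^ 2) ^ 3 ≤ qNum q (k + 1) * qNum q (n + 1) / (qNum q (l + 1) * qNum q (r + 1) ^ 2) ∧
      qNum q (k + 1) * qNum q (n + 1) / (qNum q (l + 1) * qNum q (r + 1) ^ 2) ≤
        ((1 - q ^ 2) ^ 2)⁻¹ := by
  have hl' : l + 2 * r = n + k := by omega
  set T : ℝ := q ^ 2 with hTdef
  have hT0 : 0 < T := by positivity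
  have hT1 : T < 1 := by nlinarith
  have hc : 0 < 1 - T := by linarith
  have hfpos : ∀ m : ℕ, 0 < 1 - T ^ (m + 1) := fun m => by
    have := pow_lt_one₀ hT0.le hT1 (by omega : m + 1 ≠ 0); linarith
  have hflb : ∀ m : ℕ, 1 - T ≤ 1 - T ^ (m + 1) := fun m => by
    have : T ^ (m + 1) ≤ T := by
      calc T ^ (m + 1) ≤ T ^ 1 := pow_le_pow_of_le_one hT0.le hT1.le (by omega)
      _ = T := pow_one T
    linarith
  have hfub : ∀ m : ℕ, 1 - T ^ (m + 1) ≤ 1 := fun m => by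
    have : 0 ≤ T ^ (m + 1) := by positivity
    linarith
  have hqpow : q ^ l * (q ^ r) ^ 2 = q ^ k * q ^ n := by
    rw [← pow_mul, ← pow_add, ← pow_add]; congr 1; omega
  have hqne : ∀ m : ℕ, (q : ℝ) ^ m ≠ 0 := fun m => by positivity
  have hkne := (hfpos k).ne'
  have hnne := (hfpos n).ne'
  have hlne := (hfpos l).ne'
  have hrne := (hfpos r).ne'
  have hcne := hc.ne'
  have key : qNum q (k + 1) * qNum q (n + 1) / (qNum q (l + 1) * qNum q (r + 1) ^ 2)
      = (1 - T) * ((1 - T ^ (k + 1)) * (1 - T ^ (n + 1)))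
        / ((1 - T ^ (l + 1)) * (1 - T ^ (r + 1)) ^ 2) := by
    have step : qNum q (k + 1) * qNum q (n + 1) / (qNum q (l + 1) * qNum q (r + 1) ^ 2)
        = (1 - T) * ((1 - T ^ (k + 1)) * (1 - T ^ (n + 1)))
          / ((1 - T ^ (l + 1)) * (1 - T ^ (r + 1)) ^ 2)
          * ((q ^ l * (q ^ r) ^ 2) / (q ^ k * q ^ n)) := by
      rw [qNum_succ q hq0, qNum_succ q hq0, qNum_succ q hq0, qNum_succ q hq0, ← hTdef]
      field_simp
    rw [step, hqpow, div_self (mul_ne_zero (hqne k) (hqne n)), mul_one]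
  rw [key]
  have hDpos : 0 < (1 - T ^ (l + 1)) * (1 - T ^ (r + 1)) ^ 2 := mul_pos (hfpos l) (pow_pos (hfpos r) 2)
  constructor
  · rw [le_div_iff₀ hDpos]
    have hAB : (1 - T) * (1 - T) ≤ (1 - T ^ (k + 1)) * (1 - T ^ (n + 1)) :=
      mul_le_mul (hflb k) (hflb n) hc.le (hfpos k).le
    have hCD : (1 - T ^ (l + 1)) * (1 - T ^ (r + 1)) ^ 2 ≤ 1 :=
      mul_le_one₀ (hfub l) (by positivity) (pow_le_one₀ (hfpos r).le (hfub r))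
    calc (1 - T) ^ 3 * ((1 - T ^ (l + 1)) * (1 - T ^ (r + 1)) ^ 2)
        ≤ (1 - T) ^ 3 * 1 := mul_le_mul_of_nonneg_left hCD (pow_nonneg hc.le 3)
      _ = (1 - T) * ((1 - T) * (1 - T)) := by ring
      _ ≤ (1 - T) * ((1 - T ^ (k + 1)) * (1 - T ^ (n + 1))) :=
          mul_le_mul_of_nonneg_left hAB hc.le
  · rw [div_le_iff₀ hDpos, inv_mul_eq_div, le_div_iff₀ (pow_pos hc 2)]
    have hAB1 : (1 - T ^ (k + 1)) * (1 - T ^ (n + 1)) ≤ 1 :=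
      mul_le_one₀ (hfub k) (hfpos n).le (hfub n)
    have hD2 : (1 - T) ^ 2 ≤ (1 - T ^ (r + 1)) ^ 2 := pow_le_pow_left₀ hc.le (hflb r) 2
    calc (1 - T) * ((1 - T ^ (k + 1)) * (1 - T ^ (n + 1))) * (1 - T) ^ 2
        = ((1 - T ^ (k + 1)) * (1 - T ^ (n + 1))) * ((1 - T) * (1 - T) ^ 2) := by ring
      _ ≤ 1 * ((1 - T) * (1 - T) ^ 2) := mul_le_mul_of_nonneg_right hAB1 (mul_nonneg hc.le (sq_nonneg _))
      _ = (1 - T) * (1 - T) ^ 2 := one_mul _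
      _ ≤ (1 - T ^ (l + 1)) * (1 - T ^ (r + 1)) ^ 2 :=
          mul_le_mul (hflb l) hD2 (by positivity) (hfpos l).le
end

section
/- For 0 < q < 1 and nonnegative integers n, k, r with r ≤ min(n,k) and l = n+k-2r, the quantity F(q;n,k,r) := ∏_{s=1}^{r} [1+s]_q [n-r+s]_q [k-r+s]_q / ([l+1+s]_q [s]_q^2) satisfies 1 ≤ F(q;n,k,r) ≤ (∏_{s=1}^{∞} 1/(1-q^{2s}))^3. -/
lemma sub_pow_pos {q : ℝ} (hq0 : 0 < q) (hq1 : q < 1) (a : ℕ) (ha : a ≠ 0) :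
    0 < 1 - q ^ a := by
  have : q ^ a < 1 := pow_lt_one₀ hq0.le hq1 ha
  linarith

lemma term_pos {q : ℝ} (hq0 : 0 < q) (hq1 : q < 1) (i : ℕ) :
    0 < (1 - q ^ (2 * i + 2))⁻¹ :=
  inv_pos.mpr (sub_pow_pos hq0 hq1 _ (by omega))

lemma one_le_term {q : ℝ} (hq0 : 0 < q) (hq1 : q < 1) (i : ℕ) :
    1 ≤ (1 - q ^ (2 * i + 2))⁻¹ := by
  have h0 : 0 < 1 - q ^ (2 * i + 2) := sub_pow_pos hq0 hq1 _ (by omega)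
  have h1 : 1 - q ^ (2 * i + 2) ≤ 1 := by
    have := pow_pos hq0 (2 * i + 2); linarith
  exact one_le_inv_iff₀.mpr ⟨h0, h1⟩

lemma log_term_summable {q : ℝ} (hq0 : 0 < q) (hq1 : q < 1) :
    Summable (fun i : ℕ => Real.log ((1 - q ^ (2 * i + 2))⁻¹)) := by
  have hq' : (0:ℝ) ≤ q := hq0.le
  have hc2 : (0:ℝ) < 1 - q ^ 2 := sub_pow_pos hq0 hq1 2 (by norm_num)
  have hg : Summable (fun i : ℕ => q ^ 2 / (1 - q ^ 2) * (q ^ 2) ^ i) :=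
    Summable.mul_left _
      (summable_geometric_of_lt_one (by positivity) (pow_lt_one₀ hq' hq1 (by norm_num)))
  refine Summable.of_nonneg_of_le
    (fun i => Real.log_nonneg (one_le_term hq0 hq1 i)) (fun i => ?_) hg
  have h0 : 0 < 1 - q ^ (2 * i + 2) := sub_pow_pos hq0 hq1 _ (by omega)
  have hle : q ^ (2 * i + 2) ≤ q ^ 2 := by
    apply pow_le_pow_of_le_one hq' hq1.le; omega
  calc Real.log ((1 - q ^ (2 * i + 2))⁻¹)
      ≤ (1 - q ^ (2 * i + 2))⁻¹ - 1 :=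
        Real.log_le_sub_one_of_pos (inv_pos.mpr h0)
    _ = q ^ (2 * i + 2) / (1 - q ^ (2 * i + 2)) := by
        field_simp
        ring
    _ ≤ q ^ (2 * i + 2) / (1 - q ^ 2) := by
        apply div_le_div_of_nonneg_left (pow_pos hq0 _).le hc2
        linarith
    _ = q ^ 2 / (1 - q ^ 2) * (q ^ 2) ^ i := by
        rw [← pow_mul]
        rw [show 2 * i + 2 = 2 + 2 * i by ring, pow_add]
        ring

lemma tprod_term_eq {q : ℝ} (hq0 : 0 < q) (hq1 : q < 1) :
    (∏' i : ℕ, (1 - q ^ (2 * i + 2))⁻¹) =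
      Real.exp (∑' i : ℕ, Real.log ((1 - q ^ (2 * i + 2))⁻¹)) := by
  have := Real.rexp_tsum_eq_tprod (f := fun i => (1 - q ^ (2 * i + 2))⁻¹)
    (fun i => term_pos hq0 hq1 i) (log_term_summable hq0 hq1)
  exact this.symm

lemma finset_prod_term_le_tprod {q : ℝ} (hq0 : 0 < q) (hq1 : q < 1) (T : Finset ℕ) :
    ∏ i ∈ T, (1 - q ^ (2 * i + 2))⁻¹ ≤ ∏' i : ℕ, (1 - q ^ (2 * i + 2))⁻¹ := by
  rw [tprod_term_eq hq0 hq1]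
  have h1 : ∏ i ∈ T, (1 - q ^ (2 * i + 2))⁻¹ =
      Real.exp (∑ i ∈ T, Real.log ((1 - q ^ (2 * i + 2))⁻¹)) := by
    rw [Real.exp_sum]
    exact Finset.prod_congr rfl fun i _ => (Real.exp_log (term_pos hq0 hq1 i)).symm
  rw [h1]
  apply Real.exp_le_exp.mpr
  exact Summable.sum_le_tsum T (fun i _ => Real.log_nonneg (one_le_term hq0 hq1 i))
    (log_term_summable hq0 hq1)

lemma one_le_tprod_term {q : ℝ} (hq0 : 0 < q) (hq1 : q < 1) :
    1 ≤ ∏' i : ℕ, (1 - q ^ (2 * i + 2))⁻¹ := by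
  simpa using finset_prod_term_le_tprod hq0 hq1 ∅

lemma shifted_prod_le_tprod {q : ℝ} (hq0 : 0 < q) (hq1 : q < 1) (r L : ℕ) :
    ∏ s ∈ Finset.Icc 1 r, (1 - q ^ (2 * (L + s)))⁻¹ ≤
      ∏' i : ℕ, (1 - q ^ (2 * i + 2))⁻¹ := by
  have key : ∀ s ∈ Finset.Icc 1 r,
      (1 - q ^ (2 * (L + s)))⁻¹ = (1 - q ^ (2 * (L + s - 1) + 2))⁻¹ := by
    intro s hs
    simp only [Finset.mem_Icc] at hs
    congr 3
    omega
  rw [Finset.prod_congr rfl key]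
  have inj : ∀ x ∈ Finset.Icc 1 r, ∀ y ∈ Finset.Icc 1 r,
      L + x - 1 = L + y - 1 → x = y := by
    intro x hx y hy h
    simp only [Finset.mem_Icc] at hx hy
    omega
  rw [← Finset.prod_image (f := fun i : ℕ => (1 - q ^ (2 * i + 2))⁻¹)
      (g := fun s => L + s - 1) inj]
  exact finset_prod_term_le_tprod hq0 hq1 _

lemma core_ineq {A B c a : ℝ} (hA0 : 0 < A) (hA1 : A ≤ 1) (hB0 : 0 < B) (hB1 : B ≤ 1)
    (hc0 : 0 < c) (hc1 : c < 1) (ha0 : 0 < a) (ha1 : a < 1) :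
    (1 - A * B * c * a) * (1 - a) ^ 2 ≤ (1 - c * a) * (1 - A * a) * (1 - B * a) := by
  have hAB1 : A * B ≤ 1 := mul_le_one₀ hA1 hB0.le hB1
  have h1 : (1 - a) * (1 - A * B * a) ≤ (1 - A * a) * (1 - B * a) := by
    nlinarith [mul_nonneg (mul_nonneg ha0.le (sub_nonneg.mpr hA1)) (sub_nonneg.mpr hB1)]
  have h2 : (1 - a) * (1 - A * B * c * a) ≤ (1 - c * a) * (1 - A * B * a) := by
    nlinarith [mul_nonneg (mul_nonneg ha0.le (sub_nonneg.mpr hc1.le)) (sub_nonneg.mpr hAB1)]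
  have hca : c * a < 1 := by nlinarith
  calc (1 - A * B * c * a) * (1 - a) ^ 2
      = (1 - a) * ((1 - a) * (1 - A * B * c * a)) := by ring
    _ ≤ (1 - a) * ((1 - c * a) * (1 - A * B * a)) :=
        mul_le_mul_of_nonneg_left h2 (by linarith)
    _ = (1 - c * a) * ((1 - a) * (1 - A * B * a)) := by ring
    _ ≤ (1 - c * a) * ((1 - A * a) * (1 - B * a)) :=
        mul_le_mul_of_nonneg_left h1 (by linarith)
    _ = (1 - c * a) * (1 - A * a) * (1 - B * a) := by ring

lemma core_den_pos {A B c a : ℝ} (hA0 : 0 < A) (hA1 : A ≤ 1) (hB0 : 0 < B) (hB1 : B ≤ 1)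
    (hc0 : 0 < c) (hc1 : c < 1) (ha0 : 0 < a) (ha1 : a < 1) :
    0 < (1 - A * B * c * a) * (1 - a) ^ 2 := by
  have hAB1 : A * B ≤ 1 := mul_le_one₀ hA1 hB0.le hB1
  have hABc : A * B * c ≤ 1 := mul_le_one₀ hAB1 hc0.le hc1.le
  have h : A * B * c * a < 1 := by nlinarith
  have h2 : (0:ℝ) < (1-a)^2 := pow_pos (by linarith) 2
  exact mul_pos (by linarith) h2

lemma factor_lb (q : ℝ) (hq0 : 0 < q) (hq1 : q < 1) (m j s : ℕ) (hs : 1 ≤ s) :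
    1 ≤ (1 - q ^ (2 * (1 + s))) * (1 - q ^ (2 * (m + s))) * (1 - q ^ (2 * (j + s))) /
      ((1 - q ^ (2 * (m + j + 1 + s))) * (1 - q ^ (2 * s)) ^ 2) := by
  have hq' : (0:ℝ) ≤ q := hq0.le
  have hA0 : 0 < q ^ (2 * m) := pow_pos hq0 _
  have hB0 : 0 < q ^ (2 * j) := pow_pos hq0 _
  have ha0 : 0 < q ^ (2 * s) := pow_pos hq0 _
  have hc0 : 0 < q ^ 2 := pow_pos hq0 _
  have hA1 : q ^ (2 * m) ≤ 1 := pow_le_one₀ hq' hq1.le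
  have hB1 : q ^ (2 * j) ≤ 1 := pow_le_one₀ hq' hq1.le
  have ha1 : q ^ (2 * s) < 1 := pow_lt_one₀ hq' hq1 (by omega)
  have hc1 : q ^ 2 < 1 := pow_lt_one₀ hq' hq1 (by norm_num)
  have e1 : q ^ (2 * (1 + s)) = q ^ 2 * q ^ (2 * s) := by rw [← pow_add]; ring_nf
  have e2 : q ^ (2 * (m + s)) = q ^ (2 * m) * q ^ (2 * s) := by rw [← pow_add]; ring_nf
  have e3 : q ^ (2 * (j + s)) = q ^ (2 * j) * q ^ (2 * s) := by rw [← pow_add]; ring_nf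
  have e4 : q ^ (2 * (m + j + 1 + s)) = q ^ (2 * m) * q ^ (2 * j) * q ^ 2 * q ^ (2 * s) := by
    rw [← pow_add, ← pow_add, ← pow_add]; ring_nf
  rw [e1, e2, e3, e4,
    le_div_iff₀ (core_den_pos hA0 hA1 hB0 hB1 hc0 hc1 ha0 ha1), one_mul]
  have := core_ineq hA0 hA1 hB0 hB1 hc0 hc1 ha0 ha1
  linarith

lemma factor_eq (q : ℝ) (hq0 : 0 < q) (hq1 : q < 1) (m j s : ℕ) (hs : 1 ≤ s) :
    qNum q (1 + s) * qNum q (m + s) * qNum q (j + s) /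
      (qNum q (m + j + 1 + s) * qNum q s ^ 2) =
    (1 - q ^ (2 * (1 + s))) * (1 - q ^ (2 * (m + s))) * (1 - q ^ (2 * (j + s))) /
      ((1 - q ^ (2 * (m + j + 1 + s))) * (1 - q ^ (2 * s)) ^ 2) := by
  have hq : (q : ℝ) ≠ 0 := hq0.ne'
  have hz : ∀ a : ℕ, q ^ (1 - (a : ℤ)) = q / q ^ a := by
    intro a
    rw [zpow_sub₀ hq, zpow_one, zpow_natCast]
  have h2 : (1 : ℝ) - q ^ 2 ≠ 0 := (sub_pow_pos hq0 hq1 2 (by norm_num)).ne'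
  have hs' : (1 : ℝ) - q ^ (2 * s) ≠ 0 := (sub_pow_pos hq0 hq1 _ (by omega)).ne'
  have hl : (1 : ℝ) - q ^ (2 * (m + j + 1 + s)) ≠ 0 := (sub_pow_pos hq0 hq1 _ (by omega)).ne'
  simp only [qNum, hz]
  field_simp
  ring


lemma factor_ub (q : ℝ) (hq0 : 0 < q) (hq1 : q < 1) (m j s : ℕ) (hs : 1 ≤ s) :
    (1 - q ^ (2 * (1 + s))) * (1 - q ^ (2 * (m + s))) * (1 - q ^ (2 * (j + s))) /
      ((1 - q ^ (2 * (m + j + 1 + s))) * (1 - q ^ (2 * s)) ^ 2) ≤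
    (1 - q ^ (2 * (m + j + 1 + s)))⁻¹ * ((1 - q ^ (2 * s))⁻¹) ^ 2 := by
  have hx : 0 < 1 - q ^ (2 * (m + j + 1 + s)) := sub_pow_pos hq0 hq1 _ (by omega)
  have hy : 0 < 1 - q ^ (2 * s) := sub_pow_pos hq0 hq1 _ (by omega)
  have hden : 0 < (1 - q ^ (2 * (m + j + 1 + s))) * (1 - q ^ (2 * s)) ^ 2 :=
    mul_pos hx (pow_pos hy 2)
  have nn : ∀ e : ℕ, 0 ≤ 1 - q ^ e := fun e => by
    have := pow_le_one₀ hq0.le hq1.le (n := e); linarith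
  have le1 : ∀ e : ℕ, 1 - q ^ e ≤ 1 := fun e => by
    have := pow_nonneg hq0.le e; linarith
  have hnum : (1 - q ^ (2 * (1 + s))) * (1 - q ^ (2 * (m + s))) * (1 - q ^ (2 * (j + s))) ≤ 1 :=
    mul_le_one₀ (mul_le_one₀ (le1 _) (nn _) (le1 _)) (nn _) (le1 _)
  have h1 : (1 - q ^ (2 * (1 + s))) * (1 - q ^ (2 * (m + s))) * (1 - q ^ (2 * (j + s))) /
      ((1 - q ^ (2 * (m + j + 1 + s))) * (1 - q ^ (2 * s)) ^ 2) ≤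
      1 / ((1 - q ^ (2 * (m + j + 1 + s))) * (1 - q ^ (2 * s)) ^ 2) := by
    gcongr
  calc _ ≤ 1 / ((1 - q ^ (2 * (m + j + 1 + s))) * (1 - q ^ (2 * s)) ^ 2) := h1
    _ = (1 - q ^ (2 * (m + j + 1 + s)))⁻¹ * ((1 - q ^ (2 * s))⁻¹) ^ 2 := by
        rw [one_div, mul_inv, inv_pow]

/-- For `0 < q < 1` and `r ≤ min n k`, with `l = n + k - 2r`, the quantity
`F(q;n,k,r) = ∏_{s=1}^r [1+s]_q[n-r+s]_q[k-r+s]_q/([l+1+s]_q[s]_q²)` satisfies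
`1 ≤ F(q;n,k,r) ≤ (∏_{s=1}^∞ 1/(1-q^{2s}))³`. -/
theorem threeVertex_norm_bounds (q : ℝ) (hq0 : 0 < q) (hq1 : q < 1) (n k r : ℕ)
    (hr : r ≤ min n k) :
    1 ≤ ∏ s ∈ Finset.Icc 1 r,
        qNum q (1 + s) * qNum q (n - r + s) * qNum q (k - r + s) /
          (qNum q (n + k - 2 * r + 1 + s) * qNum q s ^ 2) ∧
      ∏ s ∈ Finset.Icc 1 r,
        qNum q (1 + s) * qNum q (n - r + s) * qNum q (k - r + s) /
          (qNum q (n + k - 2 * r + 1 + s) * qNum q s ^ 2) ≤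
        (∏' s : ℕ, (1 - q ^ (2 * s + 2))⁻¹) ^ 3 := by
  have hrn : r ≤ n := le_trans hr (min_le_left n k)
  have hrk : r ≤ k := le_trans hr (min_le_right n k)
  have hnk : n + k - 2 * r = n - r + (k - r) := by omega
  rw [hnk]
  have hfac : ∀ s ∈ Finset.Icc 1 r,
      qNum q (1 + s) * qNum q (n - r + s) * qNum q (k - r + s) /
        (qNum q (n - r + (k - r) + 1 + s) * qNum q s ^ 2) =
      (1 - q ^ (2 * (1 + s))) * (1 - q ^ (2 * (n - r + s))) * (1 - q ^ (2 * (k - r + s))) /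
        ((1 - q ^ (2 * (n - r + (k - r) + 1 + s))) * (1 - q ^ (2 * s)) ^ 2) := by
    intro s hs
    simp only [Finset.mem_Icc] at hs
    exact factor_eq q hq0 hq1 (n - r) (k - r) s hs.1
  rw [Finset.prod_congr rfl hfac]
  constructor
  · calc (1:ℝ) = ∏ _s ∈ Finset.Icc 1 r, (1:ℝ) := (Finset.prod_const_one).symm
      _ ≤ _ := by
        apply Finset.prod_le_prod (fun i _ => zero_le_one)
        intro s hs
        simp only [Finset.mem_Icc] at hs
        exact factor_lb q hq0 hq1 (n - r) (k - r) s hs.1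
  · have step1 : ∏ s ∈ Finset.Icc 1 r,
        (1 - q ^ (2 * (1 + s))) * (1 - q ^ (2 * (n - r + s))) * (1 - q ^ (2 * (k - r + s))) /
          ((1 - q ^ (2 * (n - r + (k - r) + 1 + s))) * (1 - q ^ (2 * s)) ^ 2) ≤
        ∏ s ∈ Finset.Icc 1 r,
          (1 - q ^ (2 * (n - r + (k - r) + 1 + s)))⁻¹ * ((1 - q ^ (2 * s))⁻¹) ^ 2 := by
      apply Finset.prod_le_prod
      · intro s hs
        simp only [Finset.mem_Icc] at hs
        have := factor_lb q hq0 hq1 (n - r) (k - r) s hs.1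
        linarith
      · intro s hs
        simp only [Finset.mem_Icc] at hs
        exact factor_ub q hq0 hq1 (n - r) (k - r) s hs.1
    have step2 : ∏ s ∈ Finset.Icc 1 r,
        (1 - q ^ (2 * (n - r + (k - r) + 1 + s)))⁻¹ * ((1 - q ^ (2 * s))⁻¹) ^ 2 =
        (∏ s ∈ Finset.Icc 1 r, (1 - q ^ (2 * (n - r + (k - r) + 1 + s)))⁻¹) *
          (∏ s ∈ Finset.Icc 1 r, (1 - q ^ (2 * s))⁻¹) ^ 2 := by
      rw [Finset.prod_mul_distrib, Finset.prod_pow]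
    have hPA : ∏ s ∈ Finset.Icc 1 r, (1 - q ^ (2 * (n - r + (k - r) + 1 + s)))⁻¹ ≤
        ∏' i : ℕ, (1 - q ^ (2 * i + 2))⁻¹ :=
      shifted_prod_le_tprod hq0 hq1 r (n - r + (k - r) + 1)
    have hPB : ∏ s ∈ Finset.Icc 1 r, (1 - q ^ (2 * s))⁻¹ ≤
        ∏' i : ℕ, (1 - q ^ (2 * i + 2))⁻¹ := by
      have := shifted_prod_le_tprod hq0 hq1 r 0
      simpa using this
    have hAnn : 0 ≤ ∏ s ∈ Finset.Icc 1 r, (1 - q ^ (2 * (n - r + (k - r) + 1 + s)))⁻¹ :=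
      Finset.prod_nonneg fun i _ =>
        inv_nonneg.mpr (sub_pow_pos hq0 hq1 _ (by omega)).le
    have hBnn : 0 ≤ ∏ s ∈ Finset.Icc 1 r, (1 - q ^ (2 * s))⁻¹ :=
      Finset.prod_nonneg fun i _ => inv_nonneg.mpr (by
        have := pow_le_one₀ hq0.le hq1.le (n := 2 * i); linarith)
    have hP0 : 0 ≤ ∏' i : ℕ, (1 - q ^ (2 * i + 2))⁻¹ :=
      le_trans zero_le_one (one_le_tprod_term hq0 hq1)
    calc _ ≤ ∏ s ∈ Finset.Icc 1 r,
          (1 - q ^ (2 * (n - r + (k - r) + 1 + s)))⁻¹ * ((1 - q ^ (2 * s))⁻¹) ^ 2 := step1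
      _ = (∏ s ∈ Finset.Icc 1 r, (1 - q ^ (2 * (n - r + (k - r) + 1 + s)))⁻¹) *
          (∏ s ∈ Finset.Icc 1 r, (1 - q ^ (2 * s))⁻¹) ^ 2 := step2
      _ ≤ (∏' i : ℕ, (1 - q ^ (2 * i + 2))⁻¹) *
          (∏' i : ℕ, (1 - q ^ (2 * i + 2))⁻¹) ^ 2 := by
          apply mul_le_mul hPA (pow_le_pow_left₀ hBnn hPB 2) (pow_nonneg hBnn 2) hP0
      _ = (∏' s : ℕ, (1 - q ^ (2 * s + 2))⁻¹) ^ 3 := by ring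
end

section
/- Let A be a unital C*-algebra with a faithful tracial state τ, and let x ∈ A. Then for every ε > 0 there exists an even integer p such that ‖x‖ ≤ (1+ε) · τ((x*x)^{p/2})^{1/p}; equivalently, the L^p norms τ((x*x)^{p/2})^{1/p} converge to ‖x‖ as p → ∞ through even integers. -/
open scoped ComplexOrder

set_option maxHeartbeats 1000000

/-- In a unital C*-algebra with a faithful tracial state `τ`, for every `x` and every
`ε > 0` there is an even integer `p` with `‖x‖ ≤ (1+ε)·τ((x*x)^{p/2})^{1/p}`;
equivalently the `L^p` norms converge to `‖x‖` as `p → ∞` through even integers. -/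
theorem lp_norms_approximate_operator_norm
    {A : Type*} [NormedRing A] [StarRing A] [CStarRing A] [NormedAlgebra ℂ A]
    [CompleteSpace A] [StarModule ℂ A]
    (τ : A →ₗ[ℂ] ℂ) (hτ1 : τ 1 = 1)
    (hτpos : ∀ a : A, 0 ≤ τ (star a * a))
    (hτfaith : ∀ a : A, τ (star a * a) = 0 → a = 0)
    (hτtr : ∀ a b : A, τ (a * b) = τ (b * a))
    (x : A) : ∀ ε : ℝ, 0 < ε → ∃ p : ℕ, Even p ∧ 0 < p ∧
      ‖x‖ ≤ (1 + ε) * (τ ((star x * x) ^ (p / 2))).re ^ ((1 : ℝ) / p) := by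
  intro ε hε
  rcases eq_or_ne x 0 with rfl | hx
  · refine ⟨2, even_two, two_pos, ?_⟩
    have h0 : ((star (0:A) * 0) ^ (2 / 2) : A) = 0 := by simp
    rw [h0, map_zero, Complex.zero_re, Real.zero_rpow (by norm_num), mul_zero, norm_zero]
  letI : CStarAlgebra A := { }
  letI := CStarAlgebra.spectralOrder A
  haveI := CStarAlgebra.spectralOrderedRing A
  haveI : Nontrivial A := by
    refine ⟨1, 0, fun h => ?_⟩
    rw [h, map_zero] at hτ1
    exact one_ne_zero hτ1.symm
  have hτre : ∀ z : A, 0 ≤ z → 0 ≤ (τ z).re := by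
    intro z hz
    have hs : CFC.sqrt z * CFC.sqrt z = z := CFC.sqrt_mul_sqrt_self z hz
    have hsa : IsSelfAdjoint (CFC.sqrt z) := IsSelfAdjoint.of_nonneg (CFC.sqrt_nonneg z)
    have := hτpos (CFC.sqrt z)
    rw [hsa.star_eq, hs] at this
    exact (Complex.le_def.mp this).1
  set a : A := star x * x with ha_def
  have ha : (0:A) ≤ a := star_mul_self_nonneg x
  have hasa : IsSelfAdjoint a := IsSelfAdjoint.star_mul_self x
  have hxn : 0 < ‖x‖ := norm_pos_iff.mpr hx
  have hna : 0 < ‖a‖ := by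
    rw [ha_def, CStarRing.norm_star_mul_self]
    exact mul_pos hxn hxn
  have h1ε : (0:ℝ) < 1 + ε := by linarith
  set r : ℝ := ‖a‖ / (1 + ε) with hr_def
  have hr0 : 0 < r := div_pos hna h1ε
  have hrlt : r < ‖a‖ := by
    rw [hr_def, div_lt_iff₀ h1ε]
    nlinarith
  set f : ℝ → ℝ := fun t => max (t - r) 0 / (‖a‖ - r) with hf_def
  have hfc : Continuous f := by
    apply Continuous.div_const
    exact (continuous_id.sub continuous_const).max continuous_const
  have hf_top : f ‖a‖ = 1 := by
    rw [hf_def]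
    simp only
    rw [max_eq_left (by linarith)]
    exact div_self (by linarith)
  set b : A := cfc f a with hb_def
  have hbsa : IsSelfAdjoint b := cfc_predicate f a
  have hb0 : b ≠ 0 := by
    intro h
    have hmem : ‖a‖ ∈ spectrum ℝ a := CStarAlgebra.norm_mem_spectrum_of_nonneg ha
    have := norm_apply_le_norm_cfc f a hmem hfc.continuousOn hasa
    rw [← hb_def, h, norm_zero, hf_top] at this
    norm_num at this
  set c : ℝ := (τ (star b * b)).re with hc_def
  have hτbb : 0 ≤ τ (star b * b) := hτpos b
  have him : (τ (star b * b)).im = 0 := ((Complex.le_def.mp hτbb).2).symm.trans rfl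
  have hc0 : 0 < c := by
    rcases lt_or_eq_of_le (Complex.le_def.mp hτbb).1 with h | h
    · simpa [hc_def] using h
    · exfalso
      apply hb0
      apply hτfaith
      rw [← Complex.re_add_im (τ (star b * b)), ← h, him]
      simp
  clear_value b c
  have hspec : ∀ t ∈ spectrum ℝ a, 0 ≤ t ∧ t ≤ ‖a‖ := by
    intro t ht
    refine ⟨spectrum_nonneg_of_nonneg ha ht, ?_⟩
    exact (Real.le_norm_self t).trans (spectrum.norm_le_norm_of_mem ht)
  -- key inequality
  have key : ∀ n : ℕ, r ^ n * c ≤ (τ (a ^ n)).re := by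
    intro n
    have hle : (r ^ n) • (b * b) ≤ a ^ n := by
      have e1 : a ^ n = cfc (fun t : ℝ => t ^ n) a := (cfc_pow_id a n hasa).symm
      have e2 : (r ^ n) • (b * b) = cfc (fun t : ℝ => r ^ n * (f t * f t)) a := by
        rw [cfc_const_mul (r ^ n) (fun t => f t * f t) a ((hfc.mul hfc).continuousOn),
          cfc_mul f f a hfc.continuousOn hfc.continuousOn, hb_def]
      rw [e1, e2]
      refine cfc_mono ?_ ?_ ?_
      · intro t ht
        obtain ⟨ht0, htle⟩ := hspec t ht
        rcases le_or_gt t r with h | h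
        · have hft : f t = 0 := by
            rw [hf_def]; simp only
            rw [max_eq_right (by linarith)]
            simp
          rw [hft]
          simpa using pow_nonneg ht0 n
        · have hf1 : f t ≤ 1 := by
            rw [hf_def]; simp only
            rw [div_le_one (by linarith), max_le_iff]
            constructor <;> linarith
          have hf0 : 0 ≤ f t := by
            rw [hf_def]; simp only
            exact div_nonneg (le_max_right _ _) (by linarith)
          calc r ^ n * (f t * f t) ≤ r ^ n * 1 := by
                apply mul_le_mul_of_nonneg_left (by nlinarith) (by positivity)
            _ = r ^ n := mul_one _
            _ ≤ t ^ n := pow_le_pow_left₀ hr0.le h.le n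
      · exact (continuous_const.mul (hfc.mul hfc)).continuousOn
      · exact (continuous_pow n).continuousOn
    have h2 := hτre _ (sub_nonneg.mpr hle)
    rw [map_sub] at h2
    have e3 : τ ((r ^ n) • (b * b)) = ((r ^ n : ℝ) : ℂ) * τ (star b * b) := by
      rw [hbsa.star_eq, ← algebraMap_smul ℂ (r ^ n) (b * b), map_smul, smul_eq_mul]
      rfl
    rw [Complex.sub_re, e3] at h2
    have e4 : (((r ^ n : ℝ) : ℂ) * τ (star b * b)).re = r ^ n * c := by
      rw [Complex.mul_re, Complex.ofReal_re, Complex.ofReal_im, him]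
      simp [hc_def]
    rw [e4] at h2
    linarith
  -- choose n
  have hsqrt_pos : 0 < Real.sqrt (1 + ε) := Real.sqrt_pos.mpr h1ε
  have hsq : Real.sqrt (1 + ε) * Real.sqrt (1 + ε) = 1 + ε := Real.mul_self_sqrt h1ε.le
  have hd : 1 / Real.sqrt (1 + ε) < 1 := by
    rw [div_lt_one hsqrt_pos]
    nlinarith
  have htend : Filter.Tendsto (fun n : ℕ => c ^ ((1:ℝ) / (2 * n))) Filter.atTop (nhds 1) := by
    have h1 : Filter.Tendsto (fun n : ℕ => (1:ℝ) / (2 * n)) Filter.atTop (nhds 0) := by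
      have e : (fun n : ℕ => (1:ℝ) / (2 * n)) = fun n : ℕ => (1/2 : ℝ) * (1 / n) := by
        funext n
        ring
      rw [e]
      simpa using (tendsto_one_div_atTop_nhds_zero_nat.const_mul (1/2 : ℝ))
    have := Filter.Tendsto.rpow (tendsto_const_nhds (x := c)) h1 (Or.inl hc0.ne')
    simpa using this
  have hev : ∀ᶠ n : ℕ in Filter.atTop, 1 / Real.sqrt (1 + ε) < c ^ ((1:ℝ) / (2 * n)) :=
    htend.eventually_const_lt hd
  obtain ⟨n, hn1, hn2⟩ := (hev.and (Filter.eventually_ge_atTop 1)).exists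
  have hn0 : (0:ℝ) < n := by exact_mod_cast hn2
  refine ⟨2 * n, even_two_mul n, by positivity, ?_⟩
  have hp2 : (2 * n) / 2 = n := by omega
  rw [hp2]
  have hcast : ((2 * n : ℕ) : ℝ) = 2 * (n : ℝ) := by push_cast; ring
  rw [hcast]
  set θ : ℝ := (1:ℝ) / (2 * (n:ℝ)) with hθ_def
  have hτn : r ^ n * c ≤ (τ (a ^ n)).re := key n
  have hrnpos : 0 < r ^ n * c := by positivity
  have hmono : (r ^ n * c) ^ θ ≤ ((τ (a ^ n)).re) ^ θ :=
    Real.rpow_le_rpow hrnpos.le hτn (by positivity)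
  have hsplit : (r ^ n * c) ^ θ = Real.sqrt r * c ^ θ := by
    rw [Real.mul_rpow (by positivity) hc0.le]
    congr 1
    rw [← Real.rpow_natCast r n, ← Real.rpow_mul hr0.le, Real.sqrt_eq_rpow]
    congr 1
    rw [hθ_def]
    field_simp
  have hsqrtr : Real.sqrt r = ‖x‖ / Real.sqrt (1 + ε) := by
    rw [hr_def, ha_def, CStarRing.norm_star_mul_self,
      Real.sqrt_div (by positivity) (1 + ε), Real.sqrt_mul_self (norm_nonneg x)]
  have h9 : 1 ≤ Real.sqrt (1 + ε) * c ^ θ := by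
    rw [div_lt_iff₀ hsqrt_pos] at hn1
    nlinarith
  have hkey2 : ‖x‖ ≤ (1 + ε) * (Real.sqrt r * c ^ θ) := by
    rw [hsqrtr]
    have heq : (1 + ε) * (‖x‖ / Real.sqrt (1 + ε) * c ^ θ) =
        Real.sqrt (1 + ε) * ‖x‖ * c ^ θ := by
      calc (1 + ε) * (‖x‖ / Real.sqrt (1 + ε) * c ^ θ)
          = (1 + ε) / Real.sqrt (1 + ε) * ‖x‖ * c ^ θ := by ring
        _ = Real.sqrt (1 + ε) * ‖x‖ * c ^ θ := by rw [Real.div_sqrt]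
    rw [heq]
    calc ‖x‖ = ‖x‖ * 1 := (mul_one _).symm
      _ ≤ ‖x‖ * (Real.sqrt (1 + ε) * c ^ θ) := mul_le_mul_of_nonneg_left h9 (norm_nonneg x)
      _ = Real.sqrt (1 + ε) * ‖x‖ * c ^ θ := by ring
  calc ‖x‖ ≤ (1 + ε) * (Real.sqrt r * c ^ θ) := hkey2
    _ = (1 + ε) * ((r ^ n * c) ^ θ) := by rw [hsplit]
    _ ≤ (1 + ε) * ((τ (a ^ n)).re ^ θ) := by
        apply mul_le_mul_of_nonneg_left hmono h1ε.le
end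

section
/- Let H be a Hilbert space decomposed as an orthogonal direct sum H = ⊕_{k∈ℕ} H_k with orthogonal projections P_k. Let x be a bounded operator on H and n ∈ ℕ, D > 0 be such that: (a) P_l x P_k = 0 unless |n - k| ≤ l ≤ n + k; (b) ‖P_l x P_k ξ‖ ≤ D·C·‖P_k ξ‖ for all ξ ∈ H, l, k, where C > 0 is a fixed constant. Then ‖x‖ ≤ D·C·(n+1). -/
open ContinuousLinearMap

section aux

variable {H : Type*} [NormedAddCommGroup H] [InnerProductSpace ℂ H]

private lemma rd_pythag (g : ℕ → H) (s : Finset ℕ)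
    (h : ∀ a ∈ s, ∀ b ∈ s, a ≠ b → (inner ℂ (g a) (g b) : ℂ) = 0) :
    ‖∑ i ∈ s, g i‖ ^ 2 = ∑ i ∈ s, ‖g i‖ ^ 2 := by
  have key : (inner ℂ (∑ i ∈ s, g i) (∑ i ∈ s, g i) : ℂ)
      = ∑ i ∈ s, ((‖g i‖ : ℂ)) ^ 2 := by
    rw [sum_inner]
    refine Finset.sum_congr rfl fun i hi => ?_
    rw [inner_sum]
    rw [Finset.sum_eq_single_of_mem i hi]
    · exact inner_self_eq_norm_sq_to_K (g i)
    · intro b hb hbi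
      exact h i hi b hb (fun e => hbi e.symm)
  rw [inner_self_eq_norm_sq_to_K] at key
  have : ((‖∑ i ∈ s, g i‖ ^ 2 : ℝ) : ℂ) = ((∑ i ∈ s, ‖g i‖ ^ 2 : ℝ) : ℂ) := by
    push_cast
    exact key
  exact_mod_cast this

private lemma rd_summable [CompleteSpace H] (g : ℕ → H)
    (h : ∀ a b, a ≠ b → (inner ℂ (g a) (g b) : ℂ) = 0)
    (hsq : Summable fun i => ‖g i‖ ^ 2) : Summable g := by
  rw [summable_iff_vanishing]
  intro e he
  obtain ⟨ε, hε, hball⟩ := Metric.mem_nhds_iff.1 he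
  obtain ⟨s, hs⟩ := summable_iff_vanishing.1 hsq (Metric.ball 0 (ε ^ 2))
    (Metric.ball_mem_nhds _ (by positivity))
  refine ⟨s, fun t ht => ?_⟩
  apply hball
  rw [Metric.mem_ball, dist_zero_right]
  have h1 : ‖∑ i ∈ t, g i‖ ^ 2 = ∑ i ∈ t, ‖g i‖ ^ 2 :=
    rd_pythag g t (fun a _ b _ hab => h a b hab)
  have h2 : ∑ i ∈ t, ‖g i‖ ^ 2 < ε ^ 2 := by
    have := hs t ht
    rw [Metric.mem_ball, dist_zero_right, Real.norm_eq_abs] at this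
    exact (le_abs_self _).trans_lt this
  exact lt_of_pow_lt_pow_left₀ 2 hε.le (by rw [h1]; exact h2)

end aux

/-- The abstract Cauchy–Schwarz argument underlying property (RD).  If
`H = ⊕_k H_k` with orthogonal projections `P_k`, and `x` satisfies
`P_l x P_k = 0` unless `|n-k| ≤ l ≤ n+k` and `l+n+k` is even, together with the
uniform bound `‖P_l x P_k ξ‖ ≤ D·C·‖P_k ξ‖`, then `‖x‖ ≤ D·C·(n+1)`. -/
theorem rapid_decay_abstract
    {H : Type*} [NormedAddCommGroup H] [InnerProductSpace ℂ H] [CompleteSpace H]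
    (P : ℕ → H →L[ℂ] H)
    (hidem : ∀ k, (P k).comp (P k) = P k)
    (hadj : ∀ k, ContinuousLinearMap.adjoint (P k) = P k)
    (horth : ∀ k l, k ≠ l → (P k).comp (P l) = 0)
    (hsum : ∀ ξ : H, HasSum (fun k => P k ξ) ξ)
    (x : H →L[ℂ] H) (n : ℕ) (D C : ℝ) (hD : 0 < D) (hC : 0 < C)
    (hvanish : ∀ l k : ℕ,
      ¬(((n : ℤ) - k ≤ l) ∧ ((k : ℤ) - n ≤ l) ∧ ((l : ℤ) ≤ n + k) ∧ Even (l + n + k)) →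
        ((P l).comp (x.comp (P k))) = 0)
    (hbound : ∀ (l k : ℕ) (ξ : H), ‖P l (x (P k ξ))‖ ≤ D * C * ‖P k ξ‖) :
    ‖x‖ ≤ D * C * (n + 1) := by
  classical
  -- inner-product orthogonality of the ranges of the projections
  have horthI : ∀ a b (u v : H), a ≠ b → (inner ℂ (P a u) (P b v) : ℂ) = 0 := by
    intro a b u v hab
    have h := ContinuousLinearMap.adjoint_inner_left (P a) (P b v) u
    rw [hadj a] at h
    rw [h, ← ContinuousLinearMap.comp_apply, horth a b hab,
      ContinuousLinearMap.zero_apply, inner_zero_right]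
  -- Parseval
  have hpar : ∀ ζ : H, HasSum (fun k => ‖P k ζ‖ ^ 2) (‖ζ‖ ^ 2) := by
    intro ζ
    have h1 : HasSum (fun k => (innerSL ℂ ζ) (P k ζ)) ((innerSL ℂ ζ) ζ) :=
      (hsum ζ).mapL _
    have h2 : ∀ k, (innerSL ℂ ζ) (P k ζ) = ((‖P k ζ‖ ^ 2 : ℝ) : ℂ) := by
      intro k
      have hk : P k (P k ζ) = P k ζ := by
        rw [← ContinuousLinearMap.comp_apply, hidem]
      have h := ContinuousLinearMap.adjoint_inner_left (P k) (P k ζ) ζ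
      rw [hadj k] at h
      have h0 : (innerSL ℂ ζ) (P k ζ) = inner ℂ ζ (P k ζ) := rfl
      rw [h0, ← hk, ← h, hk, inner_self_eq_norm_sq_to_K]
      norm_cast
    have h3 : ((innerSL ℂ ζ) ζ) = ((‖ζ‖ ^ 2 : ℝ) : ℂ) := by
      have : (innerSL ℂ ζ) ζ = (inner ℂ ζ ζ : ℂ) := rfl
      rw [this, inner_self_eq_norm_sq_to_K]
      norm_cast
    rw [h3] at h1
    simp_rw [h2] at h1
    exact (Complex.hasSum_ofReal).1 h1
  have hDC : (0:ℝ) < D * C := mul_pos hD hC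
  refine x.opNorm_le_bound (by positivity) (fun ξ => ?_)
  set t : ℕ → ℕ → H := fun j k => P (n + k - 2 * j) (x (P k ξ)) with ht
  -- vanishing below the diagonal band
  have hzero : ∀ j k, k < j → j ≤ n → t j k = 0 := by
    intro j k hkj hjn
    have hcond : ¬(((n : ℤ) - k ≤ (n + k - 2 * j : ℕ)) ∧ ((k : ℤ) - n ≤ (n + k - 2 * j : ℕ))
        ∧ (((n + k - 2 * j : ℕ) : ℤ) ≤ n + k) ∧ Even ((n + k - 2 * j) + n + k)) := by
      rintro ⟨h1, -, -, -⟩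
      omega
    have h0 := hvanish (n + k - 2 * j) k hcond
    have : t j k = ((P (n + k - 2 * j)).comp (x.comp (P k))) ξ := by
      simp [ht, ContinuousLinearMap.comp_apply]
    rw [this, h0, ContinuousLinearMap.zero_apply]
  -- pairwise orthogonality of each diagonal family
  have hperp : ∀ j, j ≤ n → ∀ k k', k ≠ k' → (inner ℂ (t j k) (t j k') : ℂ) = 0 := by
    intro j hj k k' hkk
    by_cases hk : k < j
    · rw [hzero j k hk hj, inner_zero_left]
    by_cases hk' : k' < j
    · rw [hzero j k' hk' hj, inner_zero_right]
    · exact horthI _ _ _ _ (by omega)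
  -- each diagonal family is square-summable, hence summable
  have hsq : ∀ j, Summable fun k => ‖t j k‖ ^ 2 := by
    intro j
    apply Summable.of_nonneg_of_le (fun k => by positivity)
      (fun k => ?_) (((hpar ξ).summable).mul_left ((D * C) ^ 2))
    have hb := hbound (n + k - 2 * j) k ξ
    have h1 : ‖t j k‖ ^ 2 ≤ (D * C * ‖P k ξ‖) ^ 2 := by
      apply pow_le_pow_left₀ (norm_nonneg _) hb
    calc ‖t j k‖ ^ 2 ≤ (D * C * ‖P k ξ‖) ^ 2 := h1
      _ = (D * C) ^ 2 * ‖P k ξ‖ ^ 2 := by ring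
  have hsummable : ∀ j, j ≤ n → Summable (t j) := fun j hj =>
    rd_summable (t j) (fun a b hab => hperp j hj a b hab) (hsq j)
  set y : ℕ → H := fun j => ∑' k, t j k with hy
  have hyS : ∀ j, j ≤ n → HasSum (t j) (y j) := fun j hj => (hsummable j hj).hasSum
  -- norm bound on each diagonal
  have hynorm : ∀ j, j ≤ n → ‖y j‖ ≤ D * C * ‖ξ‖ := by
    intro j hj
    have hT : Filter.Tendsto (fun s : Finset ℕ => ‖∑ k ∈ s, t j k‖) Filter.atTop
        (nhds ‖y j‖) := (hyS j hj).norm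
    refine le_of_tendsto' hT (fun s => ?_)
    have h1 : ‖∑ k ∈ s, t j k‖ ^ 2 = ∑ k ∈ s, ‖t j k‖ ^ 2 :=
      rd_pythag (t j) s (fun a _ b _ hab => hperp j hj a b hab)
    have h2 : ∑ k ∈ s, ‖t j k‖ ^ 2 ≤ (D * C) ^ 2 * ‖ξ‖ ^ 2 := by
      have hb : ∀ k ∈ s, ‖t j k‖ ^ 2 ≤ (D * C) ^ 2 * ‖P k ξ‖ ^ 2 := by
        intro k _
        have hb := hbound (n + k - 2 * j) k ξ
        calc ‖t j k‖ ^ 2 ≤ (D * C * ‖P k ξ‖) ^ 2 :=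
              pow_le_pow_left₀ (norm_nonneg _) hb 2
          _ = (D * C) ^ 2 * ‖P k ξ‖ ^ 2 := by ring
      calc ∑ k ∈ s, ‖t j k‖ ^ 2 ≤ ∑ k ∈ s, (D * C) ^ 2 * ‖P k ξ‖ ^ 2 :=
            Finset.sum_le_sum hb
        _ = (D * C) ^ 2 * ∑ k ∈ s, ‖P k ξ‖ ^ 2 := by rw [Finset.mul_sum]
        _ ≤ (D * C) ^ 2 * ‖ξ‖ ^ 2 := by
            apply mul_le_mul_of_nonneg_left _ (by positivity)
            exact sum_le_hasSum s (fun k _ => by positivity) (hpar ξ)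
    have : ‖∑ k ∈ s, t j k‖ ^ 2 ≤ (D * C * ‖ξ‖) ^ 2 := by
      rw [h1]; calc ∑ k ∈ s, ‖t j k‖ ^ 2 ≤ (D * C) ^ 2 * ‖ξ‖ ^ 2 := h2
        _ = (D * C * ‖ξ‖) ^ 2 := by ring
    exact (pow_le_pow_iff_left₀ (norm_nonneg _) (by positivity) (by norm_num)).1 this
  -- columnwise decomposition: for each k, the finite sum over j recovers x (P k ξ)
  have hdecomp : ∀ k, ∑ j ∈ Finset.range (n + 1), t j k = x (P k ξ) := by
    intro k
    set m := min n k with hm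
    set s' : Finset ℕ := (Finset.range (m + 1)).image (fun j => n + k - 2 * j) with hs'
    have hvan : ∀ l, l ∉ s' → P l (x (P k ξ)) = 0 := by
      intro l hl
      have hcond : ¬(((n : ℤ) - k ≤ l) ∧ ((k : ℤ) - n ≤ l) ∧ ((l : ℤ) ≤ n + k)
          ∧ Even (l + n + k)) := by
        rintro ⟨h1, h2, h3, h4⟩
        obtain ⟨r, hr⟩ := h4
        apply hl
        refine Finset.mem_image.2 ⟨r - l, Finset.mem_range.2 (by omega), by omega⟩
      have h0 := hvanish l k hcond
      have : P l (x (P k ξ)) = ((P l).comp (x.comp (P k))) ξ := by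
        simp [ContinuousLinearMap.comp_apply]
      rw [this, h0, ContinuousLinearMap.zero_apply]
    have heq : x (P k ξ) = ∑ l ∈ s', P l (x (P k ξ)) :=
      (hsum (x (P k ξ))).unique (hasSum_sum_of_ne_finset_zero hvan)
    have hinj : ∀ j ∈ Finset.range (m + 1), ∀ j' ∈ Finset.range (m + 1),
        n + k - 2 * j = n + k - 2 * j' → j = j' := by
      intro j hj j' hj' hjj
      rw [Finset.mem_range] at hj hj'
      omega
    have heq2 : ∑ l ∈ s', P l (x (P k ξ)) = ∑ j ∈ Finset.range (m + 1), t j k := by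
      rw [hs', Finset.sum_image hinj]
    have hext : ∑ j ∈ Finset.range (n + 1), t j k = ∑ j ∈ Finset.range (m + 1), t j k := by
      symm
      apply Finset.sum_subset (Finset.range_subset_range.2 (by omega))
      intro j hjn hjm
      rw [Finset.mem_range] at hjn hjm
      exact hzero j k (by omega) (by omega)
    rw [hext, ← heq2, ← heq]
  -- combine
  have hmain : HasSum (fun k => x (P k ξ)) (x ξ) := (hsum ξ).mapL x
  have h2 : HasSum (fun k => ∑ j ∈ Finset.range (n + 1), t j k)
      (∑ j ∈ Finset.range (n + 1), y j) :=
    hasSum_sum (fun j hj => hyS j (Nat.lt_succ_iff.1 (Finset.mem_range.1 hj)))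
  have hxξ : x ξ = ∑ j ∈ Finset.range (n + 1), y j := by
    apply hmain.unique
    have : (fun k => ∑ j ∈ Finset.range (n + 1), t j k) = fun k => x (P k ξ) :=
      funext hdecomp
    rwa [this] at h2
  rw [hxξ]
  calc ‖∑ j ∈ Finset.range (n + 1), y j‖ ≤ ∑ j ∈ Finset.range (n + 1), ‖y j‖ :=
        norm_sum_le _ _
    _ ≤ ∑ j ∈ Finset.range (n + 1), D * C * ‖ξ‖ :=
        Finset.sum_le_sum (fun j hj => hynorm j (Nat.lt_succ_iff.1 (Finset.mem_range.1 hj)))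
    _ = (n + 1) * (D * C * ‖ξ‖) := by
        rw [Finset.sum_const, Finset.card_range]
        simp [nsmul_eq_mul]
    _ = D * C * (n + 1) * ‖ξ‖ := by ring
end
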